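/- Let n ≥ 2r. Every maximal left-compressed intersecting family 𝒜 ⊆ [2r]^(r) extends uniquely to a maximal left-compressed intersecting family ℬ ⊆ [n]^(r) with ℬ ∩ [2r]^(r) = 𝒜. -/

import Mathlib

open Finset

/-- The ij-compression of a finite set: replace j by i if possible. -/
def comp (i j : ℕ) (A : Finset ℕ) : Finset ℕ :=
  if j ∈ A ∧ i ∉ A then insert i (A.erase j) else A

/-- The ij-compression of a family of sets. -/
def compFam (i j : ℕ) (𝒜 : Finset (Finset ℕ)) : Finset (Finset ℕ) :=
  (𝒜.filter (fun A => comp i j A ∈ 𝒜)) ∪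
    ((𝒜.filter (fun A => comp i j A ∉ 𝒜)).image (comp i j))

/-- A family is intersecting if any two members meet. -/
def IsIntersecting (𝒜 : Finset (Finset ℕ)) : Prop :=
  ∀ A ∈ 𝒜, ∀ B ∈ 𝒜, (A ∩ B).Nonempty

/-- A family is left-compressed if it is invariant under all ij-compressions, i < j. -/
def LeftCompressed (𝒜 : Finset (Finset ℕ)) : Prop :=
  ∀ i j : ℕ, 1 ≤ i → i < j → compFam i j 𝒜 = 𝒜

/-- The compression order: same size and the k-th smallest element of `A` is at most
the k-th smallest element of `B`. -/
def domLE (A B : Finset ℕ) : Prop :=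
  A.card = B.card ∧ ∀ (k : ℕ) (a b : ℕ), (A.sort (· ≤ ·))[k]? = some a →
    (B.sort (· ≤ ·))[k]? = some b → a ≤ b

/-- `A ≺ G` : `A` is generated by `G`, i.e. `|G| ≤ |A|` and the k-th smallest element
of `A` is at most the k-th smallest element of `G` for `k ≤ |G|`. -/
def prec (A G : Finset ℕ) : Prop :=
  G.card ≤ A.card ∧ ∀ (k : ℕ) (a g : ℕ), (A.sort (· ≤ ·))[k]? = some a →
    (G.sort (· ≤ ·))[k]? = some g → a ≤ g

/-- The r-element subsets of [n] = {1, ..., n}. -/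
def uniformOn (n r : ℕ) : Finset (Finset ℕ) := (Icc 1 n).powersetCard r

/-- The family ⟨𝒢⟩_r^n generated by 𝒢 under inclusion. -/
def genSub (r n : ℕ) (𝒢 : Finset (Finset ℕ)) : Finset (Finset ℕ) :=
  (uniformOn n r).filter (fun A => ∃ G ∈ 𝒢, G ⊆ A)

open Classical in
/-- The family ⟨𝒢⟩_r^n generated by 𝒢 under ≺. -/
noncomputable def genP (r n : ℕ) (𝒢 : Finset (Finset ℕ)) : Finset (Finset ℕ) :=
  (uniformOn n r).filter (fun A => ∃ G ∈ 𝒢, prec A G)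

/-- ℱ(X) : the members of ℱ meeting X. -/
def hitting (ℱ : Finset (Finset ℕ)) (X : Finset ℕ) : Finset (Finset ℕ) :=
  ℱ.filter (fun A => (A ∩ X).Nonempty)

/-- The star at 1 in [n]^(r). -/
def star (n r : ℕ) : Finset (Finset ℕ) := (uniformOn n r).filter (fun A => 1 ∈ A)

/-- A maximal left-compressed intersecting subfamily of [n]^(r). -/
def MaxLCI (n r : ℕ) (𝒜 : Finset (Finset ℕ)) : Prop :=
  𝒜 ⊆ uniformOn n r ∧ LeftCompressed 𝒜 ∧ IsIntersecting 𝒜 ∧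
    ∀ B ∈ uniformOn n r, B ∉ 𝒜 → ¬ IsIntersecting (insert B 𝒜)

/-- X is good for n and r. -/
def IsGood (n r : ℕ) (X : Finset ℕ) : Prop :=
  ∀ 𝒜 ⊆ uniformOn n r, LeftCompressed 𝒜 → IsIntersecting 𝒜 →
    (hitting 𝒜 X).card ≤ (hitting (star n r) X).card

lemma mem_uniformOn' {n r : ℕ} {A : Finset ℕ} :
    A ∈ uniformOn n r ↔ A ⊆ Icc 1 n ∧ A.card = r := by
  simp [uniformOn, mem_powersetCard]

lemma lc_closed {𝒜 : Finset (Finset ℕ)} (h : LeftCompressed 𝒜) {i j : ℕ}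
    (hi : 1 ≤ i) (hij : i < j) {A : Finset ℕ} (hA : A ∈ 𝒜) : comp i j A ∈ 𝒜 := by
  by_contra h'
  have hm : comp i j A ∈ compFam i j 𝒜 :=
    mem_union_right _ (mem_image_of_mem _ (mem_filter.2 ⟨hA, h'⟩))
  rw [h i j hi hij] at hm
  exact h' hm

lemma closed_lc {𝒜 : Finset (Finset ℕ)}
    (h : ∀ i j : ℕ, 1 ≤ i → i < j → ∀ A ∈ 𝒜, comp i j A ∈ 𝒜) : LeftCompressed 𝒜 := by
  intro i j hi hij
  unfold compFam
  rw [filter_true_of_mem (fun A hA => h i j hi hij A hA),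
    filter_false_of_mem (fun A hA h' => h' (h i j hi hij A hA)), image_empty, union_empty]

lemma comp_card {i j : ℕ} (hij : i ≠ j) (A : Finset ℕ) : (comp i j A).card = A.card := by
  unfold comp
  split_ifs with h
  · have hi : i ∉ A.erase j := fun hm => h.2 (mem_of_mem_erase hm)
    rw [card_insert_of_notMem hi, card_erase_of_mem h.1]
    have : 1 ≤ A.card := card_pos.2 ⟨j, h.1⟩
    omega
  · rfl

lemma comp_subset_Icc {n i j : ℕ} {A : Finset ℕ} (hi : 1 ≤ i) (hij : i < j)
    (hA : A ⊆ Icc 1 n) : comp i j A ⊆ Icc 1 n := by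
  unfold comp
  split_ifs with h
  · intro x hx
    rcases mem_insert.1 hx with rfl | hx
    · have hj := mem_Icc.1 (hA h.1)
      exact mem_Icc.2 ⟨hi, by omega⟩
    · exact hA (mem_of_mem_erase hx)
  · exact hA

lemma meets_comp {𝒜 : Finset (Finset ℕ)} (hLC : LeftCompressed 𝒜) {B : Finset ℕ}
    (hB : ∀ A ∈ 𝒜, (A ∩ B).Nonempty) {i j : ℕ} (hi : 1 ≤ i) (hij : i < j) :
    ∀ A ∈ 𝒜, (A ∩ comp i j B).Nonempty := by
  intro A hA
  by_contra hcon
  rw [not_nonempty_iff_eq_empty] at hcon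
  unfold comp at hcon
  split_ifs at hcon with hact
  · have hiA : i ∉ A := by
      intro h
      have : i ∈ A ∩ insert i (B.erase j) := mem_inter.2 ⟨h, mem_insert_self _ _⟩
      simp [hcon] at this
    have hkey : ∀ x ∈ A, x ∈ B → x = j := by
      intro x hxA hxB
      by_contra hxj
      have : x ∈ A ∩ insert i (B.erase j) :=
        mem_inter.2 ⟨hxA, mem_insert_of_mem (mem_erase.2 ⟨hxj, hxB⟩)⟩
      simp [hcon] at this
    obtain ⟨x, hx⟩ := hB A hA
    rw [mem_inter] at hx
    have hjA : j ∈ A := (hkey x hx.1 hx.2) ▸ hx.1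
    have hA' : comp i j A ∈ 𝒜 := lc_closed hLC hi hij hA
    have hform : comp i j A = insert i (A.erase j) := by
      unfold comp; rw [if_pos ⟨hjA, hiA⟩]
    obtain ⟨y, hy⟩ := hB _ hA'
    rw [hform, mem_inter, mem_insert] at hy
    rcases hy.1 with rfl | hy1
    · exact hact.2 hy.2
    · exact (mem_erase.1 hy1).1 (hkey y (mem_of_mem_erase hy1) hy.2)
  · obtain ⟨x, hx⟩ := hB A hA
    simp [hcon] at hx

lemma compress_into (n r : ℕ) (𝒞 : Finset (Finset ℕ)) (h𝒞 : 𝒞 ⊆ uniformOn n r)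
    (hc : ∀ i j : ℕ, 1 ≤ i → i < j → ∀ A ∈ 𝒞, comp i j A ∈ 𝒞)
    (B : Finset ℕ) (hB : (B ∩ Icc 1 (2 * r)).card ≤ r) :
    ∀ (m : ℕ) (A : Finset ℕ), (A \ Icc 1 (2 * r)).card ≤ m → A ∈ 𝒞 → A ∩ B = ∅ →
      ∃ A' ∈ 𝒞, A' ⊆ Icc 1 (2 * r) ∧ A' ∩ B = ∅ := by
  intro m
  induction m with
  | zero =>
    intro A h0 hA hAB
    refine ⟨A, hA, fun x hx => ?_, hAB⟩
    by_contra hx2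
    have : x ∈ A \ Icc 1 (2 * r) := mem_sdiff.2 ⟨hx, hx2⟩
    have := card_pos.2 ⟨x, this⟩
    omega
  | succ m ih =>
    intro A hm hA hAB
    by_cases hsub : A ⊆ Icc 1 (2 * r)
    · exact ⟨A, hA, hsub, hAB⟩
    · obtain ⟨j, hjA, hjI⟩ := not_subset.1 hsub
      have hAu := mem_uniformOn'.1 (h𝒞 hA)
      have hjn := mem_Icc.1 (hAu.1 hjA)
      have hj2r : 2 * r < j := by
        rcases Nat.lt_or_ge (2 * r) j with h | h
        · exact h
        · exact absurd (mem_Icc.2 ⟨hjn.1, h⟩) hjI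
      -- find i ∈ Icc 1 (2r) \ (A ∪ B)
      have hAI : (A ∩ Icc 1 (2 * r)).card + (A \ Icc 1 (2 * r)).card = A.card :=
        card_inter_add_card_sdiff A _
      have hAd : 1 ≤ (A \ Icc 1 (2 * r)).card :=
        card_pos.2 ⟨j, mem_sdiff.2 ⟨hjA, hjI⟩⟩
      have hIcard : (Icc 1 (2 * r)).card = 2 * r := by
        rw [Nat.card_Icc]; omega
      have hEx : (Icc 1 (2 * r) \ (A ∪ B)).Nonempty := by
        rw [← card_pos]
        have h1 : Icc 1 (2 * r) \ (A ∪ B) = Icc 1 (2 * r) \ ((A ∪ B) ∩ Icc 1 (2 * r)) := by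
          rw [sdiff_inter_self_right]
        have h2 : ((A ∪ B) ∩ Icc 1 (2 * r)).card
            ≤ (A ∩ Icc 1 (2 * r)).card + (B ∩ Icc 1 (2 * r)).card := by
          rw [union_inter_distrib_right]
          exact card_union_le _ _
        rw [h1, card_sdiff_of_subset inter_subset_right, hIcard]
        omega
      obtain ⟨i, hi⟩ := hEx
      rw [mem_sdiff, mem_union, mem_Icc] at hi
      push_neg at hi
      have hiA : i ∉ A := hi.2.1
      have hiB : i ∉ B := hi.2.2
      have hij : i < j := by omega
      have hi1 : 1 ≤ i := hi.1.1
      have hform : comp i j A = insert i (A.erase j) := by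
        unfold comp; rw [if_pos ⟨hjA, hiA⟩]
      have hnew : comp i j A ∈ 𝒞 := hc i j hi1 hij A hA
      have hdisj : comp i j A ∩ B = ∅ := by
        rw [hform, eq_empty_iff_forall_notMem]
        intro x hx
        rw [mem_inter, mem_insert] at hx
        rcases hx.1 with rfl | hx1
        · exact hiB hx.2
        · exact (eq_empty_iff_forall_notMem.1 hAB x)
            (mem_inter.2 ⟨mem_of_mem_erase hx1, hx.2⟩)
      have hmeas : (comp i j A \ Icc 1 (2 * r)).card ≤ m := by
        have hIi : i ∈ Icc 1 (2 * r) := mem_Icc.2 ⟨hi1, hi.1.2⟩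
        have : comp i j A \ Icc 1 (2 * r) = (A \ Icc 1 (2 * r)).erase j := by
          rw [hform]
          ext x
          simp only [mem_sdiff, mem_insert, mem_erase]
          constructor
          · rintro ⟨rfl | hx, hxI⟩
            · exact absurd hIi hxI
            · exact ⟨hx.1, hx.2, hxI⟩
          · rintro ⟨hxj, hxA, hxI⟩
            exact ⟨Or.inr ⟨hxj, hxA⟩, hxI⟩
        rw [this, card_erase_of_mem (mem_sdiff.2 ⟨hjA, hjI⟩)]
        omega
      exact ih (comp i j A) hmeas hnew hdisj

theorem stmt6 (n r : ℕ) (hn : 2 * r ≤ n) (𝒜 : Finset (Finset ℕ))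
    (h𝒜 : MaxLCI (2 * r) r 𝒜) :
    ∃! ℬ : Finset (Finset ℕ), MaxLCI n r ℬ ∧ ℬ ∩ uniformOn (2 * r) r = 𝒜 := by
  obtain ⟨h𝒜sub, h𝒜lc, h𝒜int, h𝒜max⟩ := h𝒜
  rcases Nat.eq_zero_or_pos r with hr0 | hr
  · -- r = 0
    subst hr0
    have hu0 : ∀ k : ℕ, uniformOn k 0 = {∅} := by
      intro k; simp [uniformOn, powersetCard_zero]
    have hnotmem : ∀ 𝒞 : Finset (Finset ℕ), IsIntersecting 𝒞 → (∅ : Finset ℕ) ∉ 𝒞 := by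
      intro 𝒞 h𝒞 hmem
      obtain ⟨x, hx⟩ := h𝒞 ∅ hmem ∅ hmem
      simp at hx
    have h𝒜e : 𝒜 = ∅ := by
      rw [hu0] at h𝒜sub
      rcases subset_singleton_iff.1 h𝒜sub with h | h
      · exact h
      · exact absurd (by rw [h]; exact mem_singleton_self ∅) (hnotmem 𝒜 h𝒜int)
    refine ⟨∅, ⟨⟨empty_subset _, ?_, ?_, ?_⟩, by simp [h𝒜e]⟩, ?_⟩
    · intro i j hi hij; simp [compFam]
    · intro A hA; simp at hA
    · intro B hB hB'
      rw [hu0 n, mem_singleton] at hB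
      subst hB
      intro hII
      obtain ⟨x, hx⟩ := hII ∅ (mem_insert_self _ _) ∅ (mem_insert_self _ _)
      simp at hx
    · rintro ℬ ⟨⟨hsub, _, hint, _⟩, _⟩
      rw [hu0] at hsub
      rcases subset_singleton_iff.1 hsub with h | h
      · exact h
      · exact absurd (by rw [h]; exact mem_singleton_self ∅) (hnotmem ℬ hint)
  · -- r ≥ 1
    set 𝓑 : Finset (Finset ℕ) :=
      (uniformOn n r).filter (fun B => ∀ A ∈ 𝒜, (A ∩ B).Nonempty) with h𝓑def
    have hmono : uniformOn (2 * r) r ⊆ uniformOn n r := by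
      intro A hA
      rw [mem_uniformOn'] at hA ⊢
      exact ⟨hA.1.trans (Icc_subset_Icc_right hn), hA.2⟩
    have key_mem : ∀ B ∈ uniformOn (2 * r) r, (∀ A ∈ 𝒜, (A ∩ B).Nonempty) → B ∈ 𝒜 := by
      intro B hBu hB
      by_contra hB'
      refine h𝒜max B hBu hB' ?_
      intro X hX Y hY
      have hBB : (B ∩ B).Nonempty := by
        rw [inter_self, ← card_pos, (mem_uniformOn'.1 hBu).2]; omega
      rcases mem_insert.1 hX with hXB | hX𝒜
      · subst hXB
        rcases mem_insert.1 hY with hYB | hY𝒜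
        · subst hYB; exact hBB
        · rw [inter_comm]; exact hB Y hY𝒜
      · rcases mem_insert.1 hY with hYB | hY𝒜
        · subst hYB; exact hB X hX𝒜
        · exact h𝒜int X hX𝒜 Y hY𝒜
    have h𝒜𝓑 : 𝒜 ⊆ 𝓑 := by
      intro A hA
      rw [h𝓑def, mem_filter]
      exact ⟨hmono (h𝒜sub hA), fun A' hA' => h𝒜int A' hA' A hA⟩
    have h𝓑closed : ∀ i j : ℕ, 1 ≤ i → i < j → ∀ B ∈ 𝓑, comp i j B ∈ 𝓑 := by
      intro i j hi hij B hB
      rw [h𝓑def, mem_filter] at hB ⊢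
      obtain ⟨hBu, hBm⟩ := hB
      rw [mem_uniformOn'] at hBu
      refine ⟨mem_uniformOn'.2 ⟨comp_subset_Icc hi hij hBu.1,
        by rw [comp_card (Nat.ne_of_lt hij) B]; exact hBu.2⟩,
        meets_comp h𝒜lc hBm hi hij⟩
    have h𝓑lc : LeftCompressed 𝓑 := closed_lc h𝓑closed
    have h𝓑sub : 𝓑 ⊆ uniformOn n r := filter_subset _ _
    -- the compression extraction, shared by two uses
    have extract : ∀ (𝒞 : Finset (Finset ℕ)), 𝒞 ⊆ uniformOn n r →
        (∀ i j : ℕ, 1 ≤ i → i < j → ∀ A ∈ 𝒞, comp i j A ∈ 𝒞) →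
        ∀ B ∈ uniformOn n r, ∀ A ∈ 𝒞, A ∩ B = ∅ →
        ∃ A' ∈ 𝒞, A' ∈ uniformOn (2 * r) r ∧ A' ∩ B = ∅ := by
      intro 𝒞 hsub hc B hBu A hA hAB
      have hBcard : (B ∩ Icc 1 (2 * r)).card ≤ r := by
        calc (B ∩ Icc 1 (2 * r)).card ≤ B.card := card_le_card inter_subset_left
        _ = r := (mem_uniformOn'.1 hBu).2
      obtain ⟨A', hA'𝒞, hA'I, hA'B⟩ :=
        compress_into n r 𝒞 hsub hc B hBcard ((A \ Icc 1 (2 * r)).card) A le_rfl hA hAB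
      exact ⟨A', hA'𝒞, mem_uniformOn'.2 ⟨hA'I, (mem_uniformOn'.1 (hsub hA'𝒞)).2⟩, hA'B⟩
    have h𝓑int : IsIntersecting 𝓑 := by
      intro X hX Y hY
      by_contra hcon
      rw [not_nonempty_iff_eq_empty] at hcon
      obtain ⟨A', hA'𝓑, hA'u, hA'Y⟩ := extract 𝓑 h𝓑sub h𝓑closed Y (h𝓑sub hY) X hX hcon
      have hA'𝒜 : A' ∈ 𝒜 := key_mem A' hA'u (mem_filter.1 hA'𝓑).2
      obtain ⟨x, hx⟩ := (mem_filter.1 hY).2 A' hA'𝒜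
      rw [hA'Y] at hx
      exact notMem_empty x hx
    refine ⟨𝓑, ⟨⟨h𝓑sub, h𝓑lc, h𝓑int, ?_⟩, ?_⟩, ?_⟩
    · -- maximality
      intro B hBu hB𝓑 hII
      rw [h𝓑def, mem_filter] at hB𝓑
      push_neg at hB𝓑
      obtain ⟨A, hA𝒜, hAB⟩ := hB𝓑 hBu
      obtain ⟨x, hx⟩ := hII A (mem_insert_of_mem (h𝒜𝓑 hA𝒜)) B (mem_insert_self _ _)
      rw [hAB] at hx
      exact notMem_empty x hx
    · -- trace
      ext B
      rw [mem_inter]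
      constructor
      · rintro ⟨hB𝓑, hBu⟩
        exact key_mem B hBu (mem_filter.1 hB𝓑).2
      · intro hB
        exact ⟨h𝒜𝓑 hB, h𝒜sub hB⟩
    · -- uniqueness
      rintro ℬ ⟨⟨hsub, hlc, hint, hmax⟩, htr⟩
      have h𝒜ℬ : 𝒜 ⊆ ℬ := by
        intro A hA
        rw [← htr] at hA
        exact (mem_inter.1 hA).1
      apply Subset.antisymm
      · intro B hB
        rw [h𝓑def, mem_filter]
        exact ⟨hsub hB, fun A hA => hint A (h𝒜ℬ hA) B hB⟩
      · intro B hB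
        by_contra hBℬ
        have hBu : B ∈ uniformOn n r := h𝓑sub hB
        have hnII := hmax B hBu hBℬ
        -- extract a member of ℬ disjoint from B
        have hexA : ∃ A ∈ ℬ, A ∩ B = ∅ := by
          by_contra hno
          push_neg at hno
          refine hnII ?_
          intro X hX Y hY
          have hBB : (B ∩ B).Nonempty := by
            rw [inter_self, ← card_pos, (mem_uniformOn'.1 hBu).2]; omega
          rcases mem_insert.1 hX with hXB | hXℬ
          · rcases mem_insert.1 hY with hYB | hYℬ
            · rw [hXB, hYB]; exact hBB
            · rw [hXB, inter_comm]
              rcases (Y ∩ B).eq_empty_or_nonempty with h | h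
              · exact absurd h (nonempty_iff_ne_empty.1 (hno Y hYℬ))
              · exact h
          · rcases mem_insert.1 hY with hYB | hYℬ
            · rw [hYB]
              rcases (X ∩ B).eq_empty_or_nonempty with h | h
              · exact absurd h (nonempty_iff_ne_empty.1 (hno X hXℬ))
              · exact h
            · exact hint X hXℬ Y hYℬ
        obtain ⟨A, hAℬ, hAB⟩ := hexA
        have hℬclosed : ∀ i j : ℕ, 1 ≤ i → i < j → ∀ C ∈ ℬ, comp i j C ∈ ℬ :=
          fun i j hi hij C hC => lc_closed hlc hi hij hC
        obtain ⟨A', hA'ℬ, hA'u, hA'B⟩ := extract ℬ hsub hℬclosed B hBu A hAℬ hAB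
        have hA'𝒜 : A' ∈ 𝒜 := by
          rw [← htr, mem_inter]
          exact ⟨hA'ℬ, hA'u⟩
        obtain ⟨x, hx⟩ := (mem_filter.1 hB).2 A' hA'𝒜
        rw [hA'B] at hx
        exact notMem_empty x hx
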